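/- Let μ > 0 and d > 0, and let q : ℝ → ℝ be a bounded measurable function with q(z) = 0 for |z| > d. Suppose v : ℝ → ℂ is a bounded C¹ function whose derivative v' is locally absolutely continuous, that v''(x) = μ² v(x) − q(x) v(x) for almost every x ∈ ℝ, and that v(x) → 0 as |x| → ∞. Then for every y ∈ ℝ, v(y) = (1/(2μ)) ∫_{-d}^{d} e^{-μ|y−z|} q(z) v(z) dz. -/

import Mathlib

open MeasureTheory intervalIntegral Set Filter

open MeasureTheory intervalIntegral

lemma bdd_intervalIntegrable (g : ℝ → ℂ) (hg : Measurable g) (C : ℝ) (hgb : ∀ x, ‖g x‖ ≤ C)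
    (a b : ℝ) : IntervalIntegrable g volume a b := by
  rw [intervalIntegrable_iff]
  exact Measure.integrableOn_of_bounded measure_Ioc_lt_top.ne hg.aestronglyMeasurable
    (Filter.Eventually.of_forall hgb)

lemma fubini_parts_core (μ y b : ℝ) (hμ : 0 < μ) (hyb : y ≤ b) (g : ℝ → ℂ) (hg : Measurable g)
    (C : ℝ) (hgb : ∀ x, ‖g x‖ ≤ C) :
    ∫ z in Ioc y b, (∫ s in Ioc z b, ((Real.exp (-(μ * (s - y))) : ℝ) : ℂ)) * g z
      = ∫ s in Ioc y b, ((Real.exp (-(μ * (s - y))) : ℝ) : ℂ) * (∫ z in Ioc y s, g z) := by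
  set E : ℝ → ℝ := fun s => Real.exp (-(μ * (s - y))) with hE
  have hEc : Continuous E := Real.continuous_exp.comp ((continuous_const.mul (continuous_id.sub continuous_const)).neg)
  set F : ℝ × ℝ → ℂ := fun p => if p.1 < p.2 then (E p.2 : ℂ) * g p.1 else 0 with hF
  have hFm : Measurable F := by
    apply Measurable.ite (measurableSet_lt measurable_fst measurable_snd)
    · exact ((Complex.measurable_ofReal.comp (hEc.measurable.comp measurable_snd))).mul
        (hg.comp measurable_fst)
    · exact measurable_const
  have hC0 : 0 ≤ C := le_trans (norm_nonneg _) (hgb 0)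
  haveI : Fact ((volume : Measure ℝ) (Ioc y b) < ⊤) := ⟨measure_Ioc_lt_top⟩
  have hFint : Integrable (Function.uncurry fun z s => F (z, s))
      ((volume.restrict (Ioc y b)).prod (volume.restrict (Ioc y b))) := by
    apply Integrable.mono' (g := fun _ => C) (integrable_const C)
    · exact hFm.aestronglyMeasurable
    · rw [Measure.prod_restrict]
      filter_upwards [ae_restrict_mem (measurableSet_Ioc.prod measurableSet_Ioc)] with p hp
      obtain ⟨z, s⟩ := p
      simp only [Function.uncurry_apply_pair, hF]
      split_ifs with h
      · have h1 : E s ≤ 1 := by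
          rw [hE]
          exact Real.exp_le_one_iff.mpr (by nlinarith [hp.2.1.le, hμ.le] : -(μ * (s - y)) ≤ 0)
        calc ‖(E s : ℂ) * g z‖ = E s * ‖g z‖ := by
              rw [norm_mul, Complex.norm_real, Real.norm_eq_abs, abs_of_pos (Real.exp_pos _)]
        _ ≤ 1 * C := mul_le_mul h1 (hgb _) (norm_nonneg _) one_pos.le
        _ = C := one_mul C
      · simpa using hC0
  calc ∫ z in Ioc y b, (∫ s in Ioc z b, (E s : ℂ)) * g z
      = ∫ z in Ioc y b, ∫ s in Ioc y b, F (z, s) := by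
        apply setIntegral_congr_fun measurableSet_Ioc
        intro z hz
        dsimp only
        have h3 : ∫ s in Ioc y b, F (z, s) = ∫ s in Ioc y b ∩ Ioi z, (E s : ℂ) * g z := by
          rw [← setIntegral_indicator measurableSet_Ioi]
          apply setIntegral_congr_fun measurableSet_Ioc
          intro s _
          simp [hF, Set.indicator_apply, Set.mem_Ioi]
        rw [h3, Set.Ioc_inter_Ioi, sup_eq_right.mpr hz.1.le, MeasureTheory.integral_mul_const]
    _ = ∫ s in Ioc y b, ∫ z in Ioc y b, F (z, s) := integral_integral_swap hFint
    _ = ∫ s in Ioc y b, (E s : ℂ) * (∫ z in Ioc y s, g z) := by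
        apply setIntegral_congr_fun measurableSet_Ioc
        intro s hs
        dsimp only
        have h1 : ∫ z in Ioc y b, F (z, s) = ∫ z in Ioc y b ∩ Iio s, (E s : ℂ) * g z := by
          rw [← setIntegral_indicator measurableSet_Iio]
          apply setIntegral_congr_fun measurableSet_Ioc
          intro z _
          simp [hF, Set.indicator_apply, Set.mem_Iio]
        have h2 : Ioc y b ∩ Iio s = Ioo y s := by
          ext z
          simp only [Set.mem_inter_iff, Set.mem_Ioc, Set.mem_Iio, Set.mem_Ioo]
          exact ⟨fun h => ⟨h.1.1, h.2⟩, fun h => ⟨⟨h.1, h.2.le.trans hs.2⟩, h.2⟩⟩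
        rw [h1, h2, ← integral_Ioc_eq_integral_Ioo, MeasureTheory.integral_const_mul]

lemma expDeriv (μ y : ℝ) (s : ℝ) :
    HasDerivAt (fun s => Real.exp (-(μ * (s - y)))) (-μ * Real.exp (-(μ * (s - y)))) s := by
  have h1 : HasDerivAt (fun s : ℝ => -(μ * (s - y))) (-μ) s := by
    simpa [Pi.neg_def] using (((hasDerivAt_id s).sub_const y).const_mul μ).neg
  simpa [mul_comm, Function.comp_def] using (Real.hasDerivAt_exp (-(μ * (s - y)))).comp s h1

lemma expInt (μ y z b : ℝ) (hμ : μ ≠ 0) :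
    ∫ s in z..b, Real.exp (-(μ * (s - y)))
      = (Real.exp (-(μ * (z - y))) - Real.exp (-(μ * (b - y)))) / μ := by
  have h : ∀ s ∈ Set.uIcc z b, HasDerivAt (fun s => -Real.exp (-(μ * (s - y))) / μ)
      (Real.exp (-(μ * (s - y)))) s := by
    intro s _
    have : HasDerivAt (fun s => -Real.exp (-(μ * (s - y))) / μ)
        (-(-μ * Real.exp (-(μ * (s - y)))) / μ) s := ((expDeriv μ y s).neg).div_const μ
    convert this using 1
    field_simp
  have hint : IntervalIntegrable (fun s => Real.exp (-(μ * (s - y)))) volume z b :=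
    (Real.continuous_exp.comp ((continuous_const.mul (continuous_id.sub continuous_const)).neg)).intervalIntegrable z b
  rw [intervalIntegral.integral_eq_sub_of_hasDerivAt h hint]
  ring

lemma fubini_parts (μ y b : ℝ) (hμ : 0 < μ) (hyb : y ≤ b) (g : ℝ → ℂ) (hg : Measurable g)
    (C : ℝ) (hgb : ∀ x, ‖g x‖ ≤ C) :
    ∫ z in y..b, ((Real.exp (-(μ * (z - y))) : ℝ) : ℂ) * g z
      = (μ : ℂ) * (∫ s in y..b, ((Real.exp (-(μ * (s - y))) : ℝ) : ℂ) * (∫ z in y..s, g z))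
        + ((Real.exp (-(μ * (b - y))) : ℝ) : ℂ) * ∫ z in y..b, g z := by
  set E : ℝ → ℝ := fun s => Real.exp (-(μ * (s - y))) with hE
  have hEc : Continuous E := Real.continuous_exp.comp ((continuous_const.mul (continuous_id.sub continuous_const)).neg)
  have hint_g : ∀ a c : ℝ, IntervalIntegrable g volume a c := bdd_intervalIntegrable g hg C hgb
  have hbz : ∀ z : ℝ, ((μ : ℂ) * ∫ s in z..b, (E s : ℂ)) = (E z : ℂ) - (E b : ℂ) := by
    intro z
    have hμ' : (μ : ℂ) ≠ 0 := Complex.ofReal_ne_zero.mpr hμ.ne'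
    simp only [hE]
    rw [intervalIntegral.integral_ofReal, expInt μ y z b hμ.ne']
    push_cast
    field_simp
  have h2 : IntervalIntegrable (fun z => (E b : ℂ) * g z) volume y b :=
    (hint_g y b).const_mul _
  have h1 : IntervalIntegrable (fun z => ((μ : ℂ) * ∫ s in z..b, (E s : ℂ)) * g z) volume y b := by
    have : IntervalIntegrable (fun z => ((E z : ℂ) - (E b : ℂ)) * g z) volume y b :=
      (hint_g y b).continuousOn_mul
        (((Complex.continuous_ofReal.comp hEc).sub continuous_const).continuousOn)
    simpa only [hbz] using this
  calc ∫ z in y..b, (E z : ℂ) * g z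
      = ∫ z in y..b, (((μ : ℂ) * ∫ s in z..b, (E s : ℂ)) * g z + (E b : ℂ) * g z) := by
        apply intervalIntegral.integral_congr
        intro z _
        dsimp only
        rw [hbz]
        ring
    _ = (∫ z in y..b, ((μ : ℂ) * ∫ s in z..b, (E s : ℂ)) * g z)
          + ∫ z in y..b, (E b : ℂ) * g z := intervalIntegral.integral_add h1 h2
    _ = (μ : ℂ) * (∫ z in y..b, (∫ s in z..b, (E s : ℂ)) * g z)
          + (E b : ℂ) * ∫ z in y..b, g z := by
        rw [intervalIntegral.integral_const_mul]
        simp_rw [mul_assoc]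
        rw [intervalIntegral.integral_const_mul]
    _ = (μ : ℂ) * (∫ s in y..b, (E s : ℂ) * (∫ z in y..s, g z))
          + (E b : ℂ) * ∫ z in y..b, g z := by
        have hcore : (∫ z in y..b, (∫ s in z..b, (E s : ℂ)) * g z)
            = ∫ s in y..b, (E s : ℂ) * (∫ z in y..s, g z) := by
          rw [intervalIntegral.integral_of_le hyb, intervalIntegral.integral_of_le hyb]
          rw [show (∫ z in Set.Ioc y b, (∫ s in z..b, (E s : ℂ)) * g z)
              = ∫ z in Set.Ioc y b, (∫ s in Set.Ioc z b, (E s : ℂ)) * g z from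
            setIntegral_congr_fun measurableSet_Ioc fun z hz => by
              rw [intervalIntegral.integral_of_le hz.2]]
          rw [fubini_parts_core μ y b hμ hyb g hg C hgb]
          exact setIntegral_congr_fun measurableSet_Ioc fun s hs => by
            rw [intervalIntegral.integral_of_le hs.1.le]
        rw [hcore]

lemma half_identity (μ : ℝ) (hμ : 0 < μ) (q : ℝ → ℝ) (hqm : Measurable q) (Q : ℝ)
    (hqb : ∀ x, |q x| ≤ Q)
    (v v' : ℝ → ℂ) (hv : ∀ x, HasDerivAt v (v' x) x) (Cb : ℝ) (hvb : ∀ x, ‖v x‖ ≤ Cb)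
    (hv'' : ∀ x w : ℝ, v' x - v' w = ∫ t in w..x, ((μ ^ 2 : ℂ) * v t - (q t : ℂ) * v t))
    (y b : ℝ) (hyb : y ≤ b) :
    ∫ z in y..b, ((Real.exp (-(μ * (z - y))) : ℝ) : ℂ) * (q z : ℂ) * v z
      = (μ : ℂ) * v y + v' y
        - ((Real.exp (-(μ * (b - y))) : ℝ) : ℂ) * ((μ : ℂ) * v b + v' b) := by
  have hμ' : (μ : ℂ) ≠ 0 := Complex.ofReal_ne_zero.mpr hμ.ne'
  set E : ℝ → ℝ := fun s => Real.exp (-(μ * (s - y))) with hE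
  have hEapp : ∀ s : ℝ, Real.exp (-(μ * (s - y))) = E s := fun s => by rw [hE]
  simp_rw [hEapp]
  have hEc : Continuous E := Real.continuous_exp.comp ((continuous_const.mul (continuous_id.sub continuous_const)).neg)
  have hEcc : Continuous fun s => ((E s : ℝ) : ℂ) := Complex.continuous_ofReal.comp hEc
  have hvc : Continuous v := continuous_iff_continuousAt.mpr fun x => (hv x).continuousAt
  set g : ℝ → ℂ := fun t => (μ ^ 2 : ℂ) * v t - (q t : ℂ) * v t with hg
  have hgm : Measurable g := by
    apply Measurable.sub
    · exact hvc.measurable.const_mul _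
    · exact (Complex.measurable_ofReal.comp hqm).mul hvc.measurable
  have hCb0 : 0 ≤ Cb := le_trans (norm_nonneg _) (hvb 0)
  have hqvb : ∀ t : ℝ, ‖(q t : ℂ) * v t‖ ≤ Q * Cb := fun t => by
    rw [norm_mul, Complex.norm_real, Real.norm_eq_abs]
    exact mul_le_mul (hqb t) (hvb t) (norm_nonneg _) ((abs_nonneg _).trans (hqb t))
  have hgb : ∀ t, ‖g t‖ ≤ μ ^ 2 * Cb + Q * Cb := by
    intro t
    have h1 : ‖(μ ^ 2 : ℂ) * v t‖ ≤ μ ^ 2 * Cb := by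
      rw [norm_mul]
      have h2 : ‖((μ : ℂ)) ^ 2‖ = μ ^ 2 := by
        rw [show ((μ : ℂ)) ^ 2 = ((μ ^ 2 : ℝ) : ℂ) by push_cast; ring, Complex.norm_real,
          Real.norm_eq_abs, abs_of_nonneg (sq_nonneg μ)]
      rw [show ((μ ^ 2 : ℂ)) = ((μ : ℂ)) ^ 2 by push_cast; ring, h2]
      exact mul_le_mul_of_nonneg_left (hvb t) (sq_nonneg μ)
    calc ‖g t‖ ≤ ‖(μ ^ 2 : ℂ) * v t‖ + ‖(q t : ℂ) * v t‖ := norm_sub_le _ _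
    _ ≤ μ ^ 2 * Cb + Q * Cb := add_le_add h1 (hqvb t)
  have hgi : ∀ a c : ℝ, IntervalIntegrable g volume a c :=
    bdd_intervalIntegrable g hgm _ hgb
  have h0 : ∀ s : ℝ, ∫ t in y..s, g t = v' s - v' y := fun s => (hv'' s y).symm
  have hv'c : Continuous v' := by
    have hcp := intervalIntegral.continuous_primitive hgi y
    exact (continuous_const.add hcp : Continuous fun x => v' y + ∫ t in y..x, g t).congr fun x => by
      show v' y + ∫ t in y..x, g t = v' x; rw [h0 x]; ring
  have hEd : ∀ s : ℝ, HasDerivAt (fun s => ((E s : ℝ) : ℂ)) (((-μ * E s : ℝ) : ℂ)) s :=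
    fun s => (expDeriv μ y s).ofReal_comp
  set A : ℂ := ∫ s in y..b, ((E s : ℝ) : ℂ) * v s with hA
  set Eb : ℝ := E b with hEbdef
  have parts : ∫ s in y..b, ((E s : ℝ) : ℂ) * v' s = (Eb : ℂ) * v b - v y + (μ : ℂ) * A := by
    have hi1 : IntervalIntegrable (fun s => ((-μ * E s : ℝ) : ℂ)) volume y b :=
      (Complex.continuous_ofReal.comp (continuous_const.mul hEc)).intervalIntegrable y b
    have hi2 : IntervalIntegrable v' volume y b := hv'c.intervalIntegrable y b
    have hparts := intervalIntegral.integral_mul_deriv_eq_deriv_mul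
      (fun x _ => hEd x) (fun x _ => hv x) hi1 hi2
    rw [hparts]
    have hEy : E y = 1 := by simp [hE]
    have h3 : ∫ s in y..b, ((-μ * E s : ℝ) : ℂ) * v s = -((μ : ℂ) * A) := by
      rw [hA, ← intervalIntegral.integral_const_mul, ← intervalIntegral.integral_neg]
      apply intervalIntegral.integral_congr
      intro s _
      push_cast
      ring
    rw [h3, hEy]
    push_cast
    ring
  have hc : ∫ s in y..b, ((E s : ℝ) : ℂ) = (((1 - Eb) / μ : ℝ) : ℂ) := by
    have : ∫ s in y..b, ((E s : ℝ) : ℂ) = ((∫ s in y..b, E s : ℝ) : ℂ) :=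
      intervalIntegral.integral_ofReal
    rw [this, hE]
    rw [expInt μ y y b hμ.ne']
    norm_num [hEbdef, hE]
  have Aint : ∫ s in y..b, ((E s : ℝ) : ℂ) * (v' s - v' y)
      = (∫ s in y..b, ((E s : ℝ) : ℂ) * v' s) - (((1 - Eb) / μ : ℝ) : ℂ) * v' y := by
    rw [← hc, ← intervalIntegral.integral_mul_const]
    have hiEv' : IntervalIntegrable (fun s => ((E s : ℝ) : ℂ) * v' s) volume y b :=
      (hEcc.mul hv'c).intervalIntegrable y b
    have hiE : IntervalIntegrable (fun s => ((E s : ℝ) : ℂ) * v' y) volume y b :=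
      (hEcc.mul continuous_const).intervalIntegrable y b
    rw [← intervalIntegral.integral_sub hiEv' hiE]
    apply intervalIntegral.integral_congr
    intro s _
    ring
  have fub := fubini_parts μ y b hμ hyb g hgm _ hgb
  simp_rw [hEapp] at fub
  simp_rw [h0] at fub
  rw [Aint, parts] at fub
  have sdef : ∫ z in y..b, ((E z : ℝ) : ℂ) * g z
      = (μ : ℂ) ^ 2 * A - ∫ z in y..b, ((E z : ℝ) : ℂ) * (q z : ℂ) * v z := by
    have hiqv : IntervalIntegrable (fun z => ((E z : ℝ) : ℂ) * ((q z : ℂ) * v z)) volume y b := by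
      apply IntervalIntegrable.continuousOn_mul _ hEcc.continuousOn
      exact bdd_intervalIntegrable _ ((Complex.measurable_ofReal.comp hqm).mul hvc.measurable)
        (Q * Cb) hqvb y b
    have hiEv : IntervalIntegrable (fun s => ((E s : ℝ) : ℂ) * v s) volume y b :=
      (hEcc.mul hvc).intervalIntegrable y b
    rw [show ∫ z in y..b, ((E z : ℝ) : ℂ) * (q z : ℂ) * v z
        = ∫ z in y..b, ((E z : ℝ) : ℂ) * ((q z : ℂ) * v z) from
      intervalIntegral.integral_congr fun z _ => by ring]
    rw [hA, ← intervalIntegral.integral_const_mul]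
    rw [← intervalIntegral.integral_sub (hiEv.const_mul _) hiqv]
    apply intervalIntegral.integral_congr
    intro z _
    simp only [hg]
    push_cast
    ring
  have hcc : (μ : ℂ) * (((1 - Eb) / μ : ℝ) : ℂ) = 1 - (Eb : ℂ) := by
    push_cast
    field_simp
  linear_combination sdef - fub + v' y * hcc

lemma half_identity_left (μ : ℝ) (hμ : 0 < μ) (q : ℝ → ℝ) (hqm : Measurable q) (Q : ℝ)
    (hqb : ∀ x, |q x| ≤ Q)
    (v v' : ℝ → ℂ) (hv : ∀ x, HasDerivAt v (v' x) x) (Cb : ℝ) (hvb : ∀ x, ‖v x‖ ≤ Cb)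
    (hv'' : ∀ x w : ℝ, v' x - v' w = ∫ t in w..x, ((μ ^ 2 : ℂ) * v t - (q t : ℂ) * v t))
    (y a : ℝ) (hay : a ≤ y) :
    ∫ z in a..y, ((Real.exp (-(μ * (y - z))) : ℝ) : ℂ) * (q z : ℂ) * v z
      = (μ : ℂ) * v y - v' y
        - ((Real.exp (-(μ * (y - a))) : ℝ) : ℂ) * ((μ : ℂ) * v a - v' a) := by
  have hvt : ∀ x : ℝ, HasDerivAt (fun z => v (2 * y - z)) (-v' (2 * y - x)) x := by
    intro x
    have hin : HasDerivAt (fun x : ℝ => 2 * y - x) (-1) x := by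
      simpa using (hasDerivAt_id x).const_sub (2 * y)
    have := (hv (2 * y - x)).scomp x hin
    simpa [Function.comp_def] using this
  have hv''t : ∀ x w : ℝ, (fun z => -v' (2 * y - z)) x - (fun z => -v' (2 * y - z)) w
      = ∫ t in w..x, ((μ ^ 2 : ℂ) * (fun z => v (2 * y - z)) t
          - ((fun z => q (2 * y - z)) t : ℂ) * (fun z => v (2 * y - z)) t) := by
    intro x w
    dsimp only
    rw [intervalIntegral.integral_comp_sub_left
      (fun t => ((μ ^ 2 : ℂ) * v t - (q t : ℂ) * v t)) (2 * y)]
    rw [← hv'' (2 * y - w) (2 * y - x)]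
    ring
  have key := half_identity μ hμ (fun z => q (2 * y - z))
    (hqm.comp (measurable_const.sub measurable_id)) Q (fun x => hqb _)
    (fun z => v (2 * y - z)) (fun z => -v' (2 * y - z)) hvt Cb (fun x => hvb _)
    hv''t y (2 * y - a) (by linarith)
  rw [show 2 * y - a - y = y - a from by ring, show 2 * y - (2 * y - a) = a from by ring,
    show 2 * y - y = y from by ring] at key
  have lhs_eq : (∫ z in y..(2 * y - a),
        ((Real.exp (-(μ * (z - y))) : ℝ) : ℂ) * (q (2 * y - z) : ℂ) * v (2 * y - z))
      = ∫ u in a..y, ((Real.exp (-(μ * (y - u))) : ℝ) : ℂ) * (q u : ℂ) * v u := by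
    have h2 := intervalIntegral.integral_comp_sub_left (a := y) (b := 2 * y - a)
      (fun u => ((Real.exp (-(μ * (y - u))) : ℝ) : ℂ) * (q u : ℂ) * v u) (2 * y)
    rw [show 2 * y - (2 * y - a) = a from by ring, show 2 * y - y = y from by ring] at h2
    rw [← h2]
    apply intervalIntegral.integral_congr
    intro z _
    dsimp only
    rw [show y - (2 * y - z) = z - y from by ring]
  rw [lhs_eq] at key
  rw [key]
  ring

lemma tendsto_exp_decay (μ y c1 c2 : ℝ) (hμ : 0 < μ) :
    Tendsto (fun b => Real.exp (-(μ * (b - y))) * (c1 + c2 * b)) atTop (nhds 0) := by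
  have h1 : Tendsto (fun x : ℝ => (c1 + c2 * y) * Real.exp (-x)) atTop (nhds 0) := by
    simpa using Real.tendsto_exp_neg_atTop_nhds_zero.const_mul (c1 + c2 * y)
  have h2 : Tendsto (fun x : ℝ => (c2 / μ) * (x * Real.exp (-x))) atTop (nhds 0) := by
    have := (Real.tendsto_pow_mul_exp_neg_atTop_nhds_zero 1).const_mul (c2 / μ)
    simpa using this
  have hψ : Tendsto (fun x : ℝ => (c1 + c2 * y) * Real.exp (-x)
      + (c2 / μ) * (x * Real.exp (-x))) atTop (nhds 0) := by
    simpa using h1.add h2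
  have hcomp : Tendsto (fun b : ℝ => μ * (b - y)) atTop atTop :=
    (tendsto_atTop_add_const_right atTop (-y) tendsto_id).const_mul_atTop hμ
  have := hψ.comp hcomp
  apply this.congr
  intro b
  simp only [Function.comp_apply]
  field_simp
  ring

/-- Let `μ > 0`, `d > 0` and let `q` be a bounded measurable potential
vanishing for `|z| > d`.  If `v` is a bounded `C¹` function whose derivative is locally
absolutely continuous (expressed by the fundamental theorem of calculus identity for
`v'` with a.e. second derivative `μ²v − qv`), and `v → 0` at infinity, then `v` is
reproduced by the exponential Green's function:
`v(y) = (1/(2μ)) ∫_{-d}^d e^{-μ|y−z|} q(z) v(z) dz`. -/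
theorem guided_mode_reproducing_identity (μ d : ℝ) (hμ : 0 < μ) (hd : 0 < d)
    (q : ℝ → ℝ) (hqm : Measurable q) (hqb : ∃ Q : ℝ, ∀ x, |q x| ≤ Q)
    (hqs : ∀ z : ℝ, d < |z| → q z = 0)
    (v v' : ℝ → ℂ) (hv : ∀ x : ℝ, HasDerivAt v (v' x) x)
    (hvb : ∃ Cb : ℝ, ∀ x, ‖v x‖ ≤ Cb)
    (hv'' : ∀ x y : ℝ,
      v' x - v' y = ∫ t in y..x, ((μ ^ 2 : ℂ) * v t - (q t : ℂ) * v t))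
    (hdecay : Filter.Tendsto v (Filter.cocompact ℝ) (nhds 0)) :
    ∀ y : ℝ, v y = (1 / (2 * (μ : ℂ))) *
      ∫ z in (-d)..d, ((Real.exp (-(μ * |y - z|)) : ℝ) : ℂ) * (q z : ℂ) * v z := by
  intro y
  obtain ⟨Q, hqb⟩ := hqb
  obtain ⟨Cb, hvb⟩ := hvb
  have hCb0 : 0 ≤ Cb := le_trans (norm_nonneg _) (hvb 0)
  have hQ0 : 0 ≤ Q := le_trans (abs_nonneg _) (hqb 0)
  have hvc : Continuous v := continuous_iff_continuousAt.mpr fun x => (hv x).continuousAt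
  set K : ℝ → ℂ := fun z => ((Real.exp (-(μ * |y - z|)) : ℝ) : ℂ) * (q z : ℂ) * v z with hK
  have hKm : Measurable K := by
    apply Measurable.mul
    apply Measurable.mul
    · exact Complex.measurable_ofReal.comp
        (Real.continuous_exp.comp ((continuous_const.mul (continuous_const.sub continuous_id).abs).neg)).measurable
    · exact Complex.measurable_ofReal.comp hqm
    · exact hvc.measurable
  have hKb : ∀ z, ‖K z‖ ≤ Q * Cb := by
    intro z
    have he : Real.exp (-(μ * |y - z|)) ≤ 1 :=
      Real.exp_le_one_iff.mpr (neg_nonpos.mpr (by positivity))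
    calc ‖K z‖ = Real.exp (-(μ * |y - z|)) * (|q z| * ‖v z‖) := by
          rw [hK]
          dsimp only
          rw [norm_mul, norm_mul, Complex.norm_real, Complex.norm_real, Real.norm_eq_abs,
            Real.norm_eq_abs, abs_of_pos (Real.exp_pos _), mul_assoc]
    _ ≤ 1 * (Q * Cb) := by
          apply mul_le_mul he _ (by positivity) one_pos.le
          exact mul_le_mul (hqb z) (hvb z) (norm_nonneg _) hQ0
    _ = Q * Cb := one_mul _
  have hKi : ∀ a b : ℝ, IntervalIntegrable K volume a b :=
    bdd_intervalIntegrable K hKm _ hKb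
  set Eb : ℝ → ℂ := fun b => ((Real.exp (-(μ * (b - y))) : ℝ) : ℂ) * ((μ : ℂ) * v b + v' b)
    with hEb
  set Ea : ℝ → ℂ := fun a => ((Real.exp (-(μ * (y - a))) : ℝ) : ℂ) * ((μ : ℂ) * v a - v' a)
    with hEa
  set L : ℂ := ∫ z in (-d)..d, K z with hL
  -- splitting identity
  have Hsplit : ∀ a b : ℝ, a ≤ y → y ≤ b →
      ∫ z in a..b, K z = 2 * (μ : ℂ) * v y - Ea a - Eb b := by
    intro a b hay hyb
    have hsum := intervalIntegral.integral_add_adjacent_intervals (hKi a y) (hKi y b)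
    have hleft : ∫ z in a..y, K z
        = ∫ z in a..y, ((Real.exp (-(μ * (y - z))) : ℝ) : ℂ) * (q z : ℂ) * v z := by
      apply intervalIntegral.integral_congr
      intro z hz
      rw [Set.uIcc_of_le hay] at hz
      rw [hK]
      dsimp only
      rw [abs_of_nonneg (sub_nonneg.mpr hz.2)]
    have hright : ∫ z in y..b, K z
        = ∫ z in y..b, ((Real.exp (-(μ * (z - y))) : ℝ) : ℂ) * (q z : ℂ) * v z := by
      apply intervalIntegral.integral_congr
      intro z hz
      rw [Set.uIcc_of_le hyb] at hz
      rw [hK]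
      dsimp only
      rw [show |y - z| = z - y from by rw [abs_sub_comm]; exact abs_of_nonneg (sub_nonneg.mpr hz.1)]
    rw [← hsum, hleft, hright,
      half_identity_left μ hμ q hqm Q hqb v v' hv Cb hvb hv'' y a hay,
      half_identity μ hμ q hqm Q hqb v v' hv Cb hvb hv'' y b hyb]
    rw [hEa, hEb]
    ring
  -- outer vanishing
  have Houter : ∀ a b : ℝ, a ≤ -d → d ≤ b → ∫ z in a..b, K z = L := by
    intro a b had hdb
    have had' : a ≤ d := le_trans had (by linarith)
    have hdd : (-d : ℝ) ≤ d := by linarith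
    have h1 : ∫ z in a..(-d), K z = 0 := by
      rw [intervalIntegral.integral_of_le had, integral_Ioc_eq_integral_Ioo]
      apply setIntegral_eq_zero_of_forall_eq_zero
      intro z hz
      obtain ⟨hz1, hz2⟩ := hz
      have hzneg : z < 0 := by linarith
      have hzd : d < |z| := by rw [abs_of_neg hzneg]; linarith
      rw [hK]
      simp [hqs z hzd]
    have h2 : ∫ z in d..b, K z = 0 := by
      rw [intervalIntegral.integral_of_le hdb, integral_Ioc_eq_integral_Ioo]
      apply setIntegral_eq_zero_of_forall_eq_zero
      intro z hz
      have : d < |z| := lt_of_lt_of_le hz.1 (le_abs_self z)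
      rw [hK]
      simp [hqs z this]
    have hs1 := intervalIntegral.integral_add_adjacent_intervals (hKi a (-d)) (hKi (-d) b)
    have hs2 := intervalIntegral.integral_add_adjacent_intervals (hKi (-d) d) (hKi d b)
    rw [← hs1, ← hs2, h1, h2, hL]
    ring
  -- derivative bound
  set Cg : ℝ := μ ^ 2 * Cb + Q * Cb with hCg
  have hgb : ∀ t : ℝ, ‖(μ ^ 2 : ℂ) * v t - (q t : ℂ) * v t‖ ≤ Cg := by
    intro t
    have h1 : ‖(μ ^ 2 : ℂ) * v t‖ ≤ μ ^ 2 * Cb := by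
      rw [norm_mul, show ((μ ^ 2 : ℂ)) = (((μ ^ 2 : ℝ)) : ℂ) by push_cast; ring,
        Complex.norm_real, Real.norm_eq_abs, abs_of_nonneg (sq_nonneg μ)]
      exact mul_le_mul_of_nonneg_left (hvb t) (sq_nonneg μ)
    have h2 : ‖(q t : ℂ) * v t‖ ≤ Q * Cb := by
      rw [norm_mul, Complex.norm_real, Real.norm_eq_abs]
      exact mul_le_mul (hqb t) (hvb t) (norm_nonneg _) hQ0
    calc ‖(μ ^ 2 : ℂ) * v t - (q t : ℂ) * v t‖
        ≤ ‖(μ ^ 2 : ℂ) * v t‖ + ‖(q t : ℂ) * v t‖ := norm_sub_le _ _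
    _ ≤ Cg := by rw [hCg]; exact add_le_add h1 h2
  have hv'bound : ∀ x : ℝ, ‖v' x‖ ≤ ‖v' 0‖ + Cg * |x| := by
    intro x
    have h := hv'' x 0
    have hb : ‖∫ t in (0 : ℝ)..x, ((μ ^ 2 : ℂ) * v t - (q t : ℂ) * v t)‖ ≤ Cg * |x - 0| :=
      intervalIntegral.norm_integral_le_of_norm_le_const fun t _ => hgb t
    rw [sub_zero] at hb
    calc ‖v' x‖ = ‖v' 0 + (v' x - v' 0)‖ := by congr 1; ring
    _ ≤ ‖v' 0‖ + ‖v' x - v' 0‖ := norm_add_le _ _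
    _ ≤ ‖v' 0‖ + Cg * |x| := by rw [h]; exact add_le_add_right hb _
  -- limits
  have hEbLim : Tendsto Eb atTop (nhds 0) := by
    have hbound : ∀ᶠ b in atTop,
        ‖Eb b‖ ≤ Real.exp (-(μ * (b - y))) * ((μ * Cb + ‖v' 0‖) + Cg * b) := by
      filter_upwards [eventually_ge_atTop (0 : ℝ)] with b hb0
      rw [hEb]
      dsimp only
      rw [norm_mul, Complex.norm_real, Real.norm_eq_abs, abs_of_pos (Real.exp_pos _)]
      apply mul_le_mul_of_nonneg_left _ (Real.exp_pos _).le
      calc ‖(μ : ℂ) * v b + v' b‖ ≤ ‖(μ : ℂ) * v b‖ + ‖v' b‖ := norm_add_le _ _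
      _ ≤ μ * Cb + (‖v' 0‖ + Cg * |b|) := by
            apply add_le_add _ (hv'bound b)
            rw [norm_mul, Complex.norm_real, Real.norm_eq_abs, abs_of_pos hμ]
            exact mul_le_mul_of_nonneg_left (hvb b) hμ.le
      _ = (μ * Cb + ‖v' 0‖) + Cg * b := by rw [abs_of_nonneg hb0]; ring
    exact squeeze_zero_norm' hbound (tendsto_exp_decay μ y (μ * Cb + ‖v' 0‖) Cg hμ)
  have hEaLim : Tendsto Ea atBot (nhds 0) := by
    have hψ : Tendsto (fun a : ℝ => Real.exp (-(μ * (y - a))) * ((μ * Cb + ‖v' 0‖) + Cg * (-a)))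
        atBot (nhds 0) := by
      have h := (tendsto_exp_decay μ (-y) (μ * Cb + ‖v' 0‖) Cg hμ).comp tendsto_neg_atBot_atTop
      apply h.congr
      intro a
      simp only [Function.comp_apply]
      rw [show -a - -y = y - a from by ring]
    have hbound : ∀ᶠ a in atBot,
        ‖Ea a‖ ≤ Real.exp (-(μ * (y - a))) * ((μ * Cb + ‖v' 0‖) + Cg * (-a)) := by
      filter_upwards [eventually_le_atBot (0 : ℝ)] with a ha0
      rw [hEa]
      dsimp only
      rw [norm_mul, Complex.norm_real, Real.norm_eq_abs, abs_of_pos (Real.exp_pos _)]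
      apply mul_le_mul_of_nonneg_left _ (Real.exp_pos _).le
      calc ‖(μ : ℂ) * v a - v' a‖ ≤ ‖(μ : ℂ) * v a‖ + ‖v' a‖ := norm_sub_le _ _
      _ ≤ μ * Cb + (‖v' 0‖ + Cg * |a|) := by
            apply add_le_add _ (hv'bound a)
            rw [norm_mul, Complex.norm_real, Real.norm_eq_abs, abs_of_pos hμ]
            exact mul_le_mul_of_nonneg_left (hvb a) hμ.le
      _ = (μ * Cb + ‖v' 0‖) + Cg * (-a) := by rw [abs_of_nonpos ha0]; ring
    exact squeeze_zero_norm' hbound hψ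
  -- combining
  have hEaConst : ∀ a : ℝ, a ≤ min (-d) y → Ea a = 2 * (μ : ℂ) * v y - L := by
    intro a ha
    have hb : ∀ b : ℝ, max d y ≤ b → Ea a + Eb b = 2 * (μ : ℂ) * v y - L := by
      intro b hb
      have h1 := Hsplit a b (le_trans ha (min_le_right _ _)) (le_trans (le_max_right _ _) hb)
      have h2 := Houter a b (le_trans ha (min_le_left _ _)) (le_trans (le_max_left _ _) hb)
      rw [h2] at h1
      linear_combination h1
    have ht1 : Tendsto (fun b => Ea a + Eb b) atTop (nhds (Ea a + 0)) :=
      tendsto_const_nhds.add hEbLim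
    have ht2 : Tendsto (fun b => Ea a + Eb b) atTop (nhds (2 * (μ : ℂ) * v y - L)) := by
      apply Tendsto.congr' _ tendsto_const_nhds
      filter_upwards [eventually_ge_atTop (max d y)] with b hbb
      exact (hb b hbb).symm
    have := tendsto_nhds_unique ht1 ht2
    rw [add_zero] at this
    exact this
  have hfinal : (0 : ℂ) = 2 * (μ : ℂ) * v y - L := by
    have ht2 : Tendsto Ea atBot (nhds (2 * (μ : ℂ) * v y - L)) := by
      apply Tendsto.congr' _ tendsto_const_nhds
      filter_upwards [eventually_le_atBot (min (-d) y)] with a haa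
      exact (hEaConst a haa).symm
    exact tendsto_nhds_unique hEaLim ht2
  have hμ' : (2 * (μ : ℂ)) ≠ 0 := by
    simp [Complex.ofReal_ne_zero.mpr hμ.ne']
  rw [hL] at hfinal
  field_simp [Complex.ofReal_ne_zero.mpr hμ.ne']
  linear_combination -hfinal
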